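/- Let Ω be a probability space, n and b positive natural numbers. Let H1, H2 : Ω → (Fin n → ZMod b) be independent random functions such that each of H1 and H2 is a pairwise independent uniform family (for each i, the value at i is uniformly distributed on ZMod b, and values at distinct indices are independent). Then the combined random function G : Fin n × Fin n → ZMod b given by G(i, j) = H1(i) + H2(j) (addition modulo b) is a pairwise independent uniform family on Fin n × Fin n: each G(i,j) is uniform on ZMod b, and for (i,j) ≠ (i',j') and any u, v ∈ ZMod b, Pr[G(i,j) = u and G(i',j') = v] = 1/b². -/

import Mathlib

open MeasureTheory
open scoped ENNReal ProbabilityTheory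


private lemma nm_of_add_compl_le {Ω : Type*} [MeasureSpace Ω]
    [IsProbabilityMeasure (ℙ : Measure Ω)] (A : Set Ω)
    (h : ℙ A + ℙ Aᶜ ≤ 1) : NullMeasurableSet A ℙ := by
  set B := toMeasurable ℙ A with hB
  set C := toMeasurable ℙ Aᶜ with hC
  have hBm : MeasurableSet B := measurableSet_toMeasurable _ _
  have hCm : MeasurableSet C := measurableSet_toMeasurable _ _
  have hABsub : A ⊆ B := subset_toMeasurable _ _
  have hACsub : Aᶜ ⊆ C := subset_toMeasurable _ _
  have hunion : ℙ (B ∪ C) = 1 := by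
    refine le_antisymm prob_le_one ?_
    have hsub : (Set.univ : Set Ω) ⊆ B ∪ C := by
      rw [← Set.union_compl_self A]; exact Set.union_subset_union hABsub hACsub
    calc (1 : ℝ≥0∞) = ℙ Set.univ := measure_univ.symm
      _ ≤ ℙ (B ∪ C) := measure_mono hsub
  have hsum : ℙ (B ∪ C) + ℙ (B ∩ C) = ℙ B + ℙ C := measure_union_add_inter _ hCm
  have hle : (1 : ℝ≥0∞) + ℙ (B ∩ C) ≤ 1 + 0 := by
    rw [add_zero]
    calc (1 : ℝ≥0∞) + ℙ (B ∩ C) = ℙ (B ∪ C) + ℙ (B ∩ C) := by rw [hunion]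
      _ = ℙ B + ℙ C := hsum
      _ = ℙ A + ℙ Aᶜ := by rw [hB, hC, measure_toMeasurable, measure_toMeasurable]
      _ ≤ 1 := h
  have hnull : ℙ (B ∩ C) = 0 :=
    le_antisymm ((ENNReal.add_le_add_iff_left ENNReal.one_ne_top).mp hle) zero_le
  have hBA : ℙ (B \ A) = 0 :=
    measure_mono_null (fun x hx => Set.mem_inter hx.1 (hACsub hx.2)) hnull
  have hae : B =ᵐ[ℙ] A := by
    rw [ae_eq_set]
    refine ⟨hBA, measure_mono_null (fun x hx => (hx.2 (hABsub hx.1)).elim) hnull⟩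
  exact hBm.nullMeasurableSet.congr hae

private lemma coord_nm {Ω : Type*} [MeasureSpace Ω] [IsProbabilityMeasure (ℙ : Measure Ω)]
    {n b : ℕ} [NeZero b] (X : Ω → Fin n → ZMod b)
    (hunif : ∀ i u, ℙ {ω | X ω i = u} = 1 / (b : ℝ≥0∞)) (i : Fin n) (u : ZMod b) :
    NullMeasurableSet {ω | X ω i = u} ℙ := by
  classical
  have hb0 : (b : ℝ≥0∞) ≠ 0 := Nat.cast_ne_zero.mpr (NeZero.ne b)
  have hbt : (b : ℝ≥0∞) ≠ ⊤ := ENNReal.natCast_ne_top b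
  apply nm_of_add_compl_le
  have hsub : {ω | X ω i = u}ᶜ ⊆ ⋃ v ∈ (Finset.univ.erase u), {ω | X ω i = v} := by
    intro ω hω
    simp only [Set.mem_compl_iff, Set.mem_setOf_eq] at hω
    exact Set.mem_biUnion (Finset.mem_erase.mpr ⟨hω, Finset.mem_univ _⟩) rfl
  have h1 : ℙ {ω | X ω i = u}ᶜ ≤ ((b - 1 : ℕ) : ℝ≥0∞) * (1 / (b : ℝ≥0∞)) := by
    calc ℙ {ω | X ω i = u}ᶜ ≤ ∑ v ∈ Finset.univ.erase u, ℙ {ω | X ω i = v} :=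
          (measure_mono hsub).trans (measure_biUnion_finset_le _ _)
      _ = ((b - 1 : ℕ) : ℝ≥0∞) * (1 / (b : ℝ≥0∞)) := by
          rw [Finset.sum_congr rfl (fun v _ => hunif i v), Finset.sum_const, nsmul_eq_mul]
          congr 1
          rw [Finset.card_erase_of_mem (Finset.mem_univ u), Finset.card_univ, ZMod.card]
  have hcast : (1 : ℝ≥0∞) + ((b - 1 : ℕ) : ℝ≥0∞) = (b : ℝ≥0∞) := by
    have hbpos : 0 < b := Nat.pos_of_ne_zero (NeZero.ne b)
    have : 1 + (b - 1) = b := by omega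
    exact_mod_cast congrArg (Nat.cast : ℕ → ℝ≥0∞) this
  calc ℙ {ω | X ω i = u} + ℙ {ω | X ω i = u}ᶜ
      ≤ 1 / (b : ℝ≥0∞) + ((b - 1 : ℕ) : ℝ≥0∞) * (1 / (b : ℝ≥0∞)) := by
        rw [hunif i u]; exact add_le_add le_rfl h1
    _ = ((1 : ℝ≥0∞) + ((b - 1 : ℕ) : ℝ≥0∞)) * (1 / (b : ℝ≥0∞)) := by ring
    _ = 1 := by rw [hcast, one_div, ENNReal.mul_inv_cancel hb0 hbt]

private lemma atom_nm {Ω : Type*} [MeasureSpace Ω] [IsProbabilityMeasure (ℙ : Measure Ω)]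
    {n b : ℕ} [NeZero b] (X : Ω → Fin n → ZMod b)
    (hunif : ∀ i u, ℙ {ω | X ω i = u} = 1 / (b : ℝ≥0∞)) (f : Fin n → ZMod b) :
    NullMeasurableSet {ω | X ω = f} ℙ := by
  have : {ω | X ω = f} = ⋂ i, {ω | X ω i = f i} := by
    ext ω; simp [funext_iff]
  rw [this]
  exact NullMeasurableSet.iInter (fun i => coord_nm X hunif i (f i))

open Classical in
private lemma measure_mem_decomp {Ω : Type*} [MeasureSpace Ω]
    [IsProbabilityMeasure (ℙ : Measure Ω)] {n b : ℕ} [NeZero b]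
    (X : Ω → Fin n → ZMod b)
    (hnm : ∀ f, NullMeasurableSet {ω | X ω = f} ℙ) (U : Set (Fin n → ZMod b)) :
    ℙ {ω | X ω ∈ U} = ∑ f : Fin n → ZMod b, if f ∈ U then ℙ {ω | X ω = f} else 0 := by
  classical
  have hset : {ω | X ω ∈ U}
      = ⋃ f : Fin n → ZMod b, if f ∈ U then {ω | X ω = f} else ∅ := by
    ext ω
    simp only [Set.mem_setOf_eq, Set.mem_iUnion]
    constructor
    · intro h; exact ⟨X ω, by rw [if_pos h]; exact rfl⟩
    · rintro ⟨f, hf⟩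
      by_cases hfU : f ∈ U
      · rw [if_pos hfU] at hf; rw [Set.mem_setOf_eq] at hf; rw [hf]; exact hfU
      · rw [if_neg hfU] at hf; exact hf.elim
  rw [hset, measure_iUnion₀, tsum_fintype]
  · refine Finset.sum_congr rfl fun f _ => ?_
    by_cases hfU : f ∈ U
    · rw [if_pos hfU, if_pos hfU]
    · rw [if_neg hfU, if_neg hfU, measure_empty]
  · intro f g hfg
    refine Disjoint.aedisjoint ?_
    dsimp only
    split_ifs <;> try simp
    exact Set.disjoint_left.mpr fun ω h1 h2 => hfg (h1.symm.trans h2)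
  · intro f
    split_ifs with hfU
    · exact hnm f
    · exact MeasurableSet.empty.nullMeasurableSet

private lemma indep_mem_sets {Ω : Type*} [MeasureSpace Ω]
    [IsProbabilityMeasure (ℙ : Measure Ω)] {n b : ℕ} [NeZero b]
    (H1 H2 : Ω → Fin n → ZMod b)
    (hindep : ∀ f g : Fin n → ZMod b,
      ℙ {ω | H1 ω = f ∧ H2 ω = g} = ℙ {ω | H1 ω = f} * ℙ {ω | H2 ω = g})
    (hH1unif : ∀ i u, ℙ {ω | H1 ω i = u} = 1 / (b : ℝ≥0∞))
    (hH2unif : ∀ j u, ℙ {ω | H2 ω j = u} = 1 / (b : ℝ≥0∞))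
    (S T : Set (Fin n → ZMod b)) :
    ℙ {ω | H1 ω ∈ S ∧ H2 ω ∈ T} = ℙ {ω | H1 ω ∈ S} * ℙ {ω | H2 ω ∈ T} := by
  classical
  have hnm1 := atom_nm H1 hH1unif
  have hnm2 := atom_nm H2 hH2unif
  have hset : {ω | H1 ω ∈ S ∧ H2 ω ∈ T}
      = ⋃ p : (Fin n → ZMod b) × (Fin n → ZMod b),
          if p.1 ∈ S ∧ p.2 ∈ T then {ω | H1 ω = p.1 ∧ H2 ω = p.2} else ∅ := by
    ext ω
    simp only [Set.mem_setOf_eq, Set.mem_iUnion]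
    constructor
    · intro h
      exact ⟨(H1 ω, H2 ω), by rw [if_pos h]; exact ⟨rfl, rfl⟩⟩
    · rintro ⟨p, hp⟩
      by_cases hpU : p.1 ∈ S ∧ p.2 ∈ T
      · rw [if_pos hpU] at hp
        rcases hp with ⟨h1, h2⟩
        rw [h1, h2]
        exact hpU
      · rw [if_neg hpU] at hp; exact hp.elim
  rw [hset, measure_iUnion₀, tsum_fintype]
  · have hterm : ∀ p : (Fin n → ZMod b) × (Fin n → ZMod b),
        ℙ (if p.1 ∈ S ∧ p.2 ∈ T then {ω | H1 ω = p.1 ∧ H2 ω = p.2} else ∅)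
        = (if p.1 ∈ S then ℙ {ω | H1 ω = p.1} else 0)
          * (if p.2 ∈ T then ℙ {ω | H2 ω = p.2} else 0) := by
      intro p
      by_cases h1 : p.1 ∈ S <;> by_cases h2 : p.2 ∈ T <;>
        simp [h1, h2, hindep p.1 p.2]
    rw [Finset.sum_congr rfl (fun p _ => hterm p)]
    rw [measure_mem_decomp H1 hnm1 S, measure_mem_decomp H2 hnm2 T,
      Finset.sum_mul_sum, Fintype.sum_prod_type]
  · intro p q hpq
    refine Disjoint.aedisjoint ?_
    dsimp only
    split_ifs <;> try simp
    refine Set.disjoint_left.mpr fun ω h1 h2 => hpq ?_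
    rcases h1 with ⟨ha, hb⟩; rcases h2 with ⟨hc, hd⟩
    exact Prod.ext (ha.symm.trans hc) (hb.symm.trans hd)
  · intro p
    split_ifs
    · have : {ω | H1 ω = p.1 ∧ H2 ω = p.2} = {ω | H1 ω = p.1} ∩ {ω | H2 ω = p.2} := rfl
      rw [this]; exact (hnm1 p.1).inter (hnm2 p.2)
    · exact MeasurableSet.empty.nullMeasurableSet

/-- If `H1, H2 : Ω → (Fin n → ZMod b)` are independent random functions, each a
pairwise independent uniform family into `ZMod b`, then the combined random
function `G(i,j) = H1(i) + H2(j)` (addition modulo `b`) is a pairwise independent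
uniform family on `Fin n × Fin n`: each `G(i,j)` is uniform on `ZMod b`, and for
`(i,j) ≠ (i',j')` and any `u, v`, `Pr[G(i,j) = u ∧ G(i',j') = v] = 1/b²`. -/
theorem add_combined_hash_pairwise_independent_uniform
    {Ω : Type*} [MeasureSpace Ω] [IsProbabilityMeasure (ℙ : Measure Ω)]
    (n b : ℕ) (hn : 0 < n) (hb : 0 < b) (H1 H2 : Ω → Fin n → ZMod b)
    -- H1 and H2 are independent (as function-valued random variables):
    (hindep : ∀ f g : Fin n → ZMod b,
      ℙ {ω | H1 ω = f ∧ H2 ω = g} = ℙ {ω | H1 ω = f} * ℙ {ω | H2 ω = g})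
    -- H1 is a pairwise independent uniform family:
    (hH1unif : ∀ i u, ℙ {ω | H1 ω i = u} = 1 / (b : ℝ≥0∞))
    (hH1pair : ∀ i i', i ≠ i' → ∀ u v,
      ℙ {ω | H1 ω i = u ∧ H1 ω i' = v} = ℙ {ω | H1 ω i = u} * ℙ {ω | H1 ω i' = v})
    -- H2 is a pairwise independent uniform family:
    (hH2unif : ∀ j u, ℙ {ω | H2 ω j = u} = 1 / (b : ℝ≥0∞))
    (hH2pair : ∀ j j', j ≠ j' → ∀ u v,
      ℙ {ω | H2 ω j = u ∧ H2 ω j' = v} = ℙ {ω | H2 ω j = u} * ℙ {ω | H2 ω j' = v}) :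
    (∀ i j : Fin n, ∀ u : ZMod b,
      ℙ {ω | H1 ω i + H2 ω j = u} = 1 / (b : ℝ≥0∞)) ∧
    (∀ i j i' j' : Fin n, (i, j) ≠ (i', j') → ∀ u v : ZMod b,
      ℙ {ω | H1 ω i + H2 ω j = u ∧ H1 ω i' + H2 ω j' = v} = 1 / (b : ℝ≥0∞)^2) := by
  haveI : NeZero b := ⟨hb.ne'⟩
  classical
  have hb0 : (b : ℝ≥0∞) ≠ 0 := Nat.cast_ne_zero.mpr hb.ne'
  have hbt : (b : ℝ≥0∞) ≠ ⊤ := ENNReal.natCast_ne_top b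
  have hbinv : (b : ℝ≥0∞) * (1 / (b : ℝ≥0∞)) = 1 := by
    rw [one_div, ENNReal.mul_inv_cancel hb0 hbt]
  have hsq : (1 : ℝ≥0∞) / (b : ℝ≥0∞) ^ 2 = 1 / (b : ℝ≥0∞) * (1 / (b : ℝ≥0∞)) := by
    rw [pow_two, one_div, ENNReal.mul_inv (Or.inl hb0) (Or.inl hbt), ← one_div]
  have master : ∀ S T : Set (Fin n → ZMod b),
      ℙ {ω | H1 ω ∈ S ∧ H2 ω ∈ T} = ℙ {ω | H1 ω ∈ S} * ℙ {ω | H2 ω ∈ T} :=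
    indep_mem_sets H1 H2 hindep hH1unif hH2unif
  -- independence of single-coordinate events
  have indep1 : ∀ (i j : Fin n) (w x : ZMod b),
      ℙ ({ω | H1 ω i = w} ∩ {ω | H2 ω j = x})
        = ℙ {ω | H1 ω i = w} * ℙ {ω | H2 ω j = x} := by
    intro i j w x
    exact master {f | f i = w} {g | g j = x}
  -- independence of pair-coordinate events
  have indep2 : ∀ (i i' j j' : Fin n) (w w' x x' : ZMod b),
      ℙ ({ω | H1 ω i = w ∧ H1 ω i' = w'} ∩ {ω | H2 ω j = x ∧ H2 ω j' = x'})
        = ℙ {ω | H1 ω i = w ∧ H1 ω i' = w'} * ℙ {ω | H2 ω j = x ∧ H2 ω j' = x'} := by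
    intro i i' j j' w w' x x'
    exact master {f | f i = w ∧ f i' = w'} {g | g j = x ∧ g j' = x'}
  -- value of a same-index "pair" event
  have hsame : ∀ (X : Ω → Fin n → ZMod b),
      (∀ i u, ℙ {ω | X ω i = u} = 1 / (b : ℝ≥0∞)) →
      ∀ (k : Fin n) (x y : ZMod b),
        ℙ {ω | X ω k = x ∧ X ω k = y} = if y = x then 1 / (b : ℝ≥0∞) else 0 := by
    intro X hu k x y
    by_cases h : y = x
    · subst h
      rw [if_pos rfl]
      have : {ω | X ω k = y ∧ X ω k = y} = {ω | X ω k = y} := by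
        ext ω; simp
      rw [this]; exact hu k y
    · rw [if_neg h]
      have : {ω | X ω k = x ∧ X ω k = y} = ∅ := by
        rw [Set.eq_empty_iff_forall_notMem]
        rintro ω ⟨h1, h2⟩
        exact h (h2.symm.trans h1)
      rw [this, measure_empty]
  -- value of distinct-index pair events
  have hval1 : ∀ (k k' : Fin n), k ≠ k' → ∀ w w' : ZMod b,
      ℙ {ω | H1 ω k = w ∧ H1 ω k' = w'} = 1 / (b : ℝ≥0∞) * (1 / (b : ℝ≥0∞)) := by
    intro k k' h w w'
    rw [hH1pair k k' h, hH1unif, hH1unif]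
  have hval2 : ∀ (k k' : Fin n), k ≠ k' → ∀ w w' : ZMod b,
      ℙ {ω | H2 ω k = w ∧ H2 ω k' = w'} = 1 / (b : ℝ≥0∞) * (1 / (b : ℝ≥0∞)) := by
    intro k k' h w w'
    rw [hH2pair k k' h, hH2unif, hH2unif]
  constructor
  · -- uniformity of the combined function
    intro i j u
    have hset : {ω | H1 ω i + H2 ω j = u}
        = ⋃ w : ZMod b, ({ω | H1 ω i = w} ∩ {ω | H2 ω j = u - w}) := by
      ext ω
      simp only [Set.mem_setOf_eq, Set.mem_iUnion, Set.mem_inter_iff]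
      constructor
      · intro h
        exact ⟨H1 ω i, rfl, by rw [← h]; ring⟩
      · rintro ⟨w, h1, h2⟩
        rw [h1, h2]; ring
    rw [hset, measure_iUnion₀, tsum_fintype]
    · calc ∑ w : ZMod b, ℙ ({ω | H1 ω i = w} ∩ {ω | H2 ω j = u - w})
          = ∑ _w : ZMod b, 1 / (b : ℝ≥0∞) * (1 / (b : ℝ≥0∞)) := by
            refine Finset.sum_congr rfl fun w _ => ?_
            rw [indep1 i j w (u - w), hH1unif, hH2unif]
        _ = (b : ℝ≥0∞) * (1 / (b : ℝ≥0∞) * (1 / (b : ℝ≥0∞))) := by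
            rw [Finset.sum_const, Finset.card_univ, ZMod.card, nsmul_eq_mul]
        _ = 1 / (b : ℝ≥0∞) := by
            calc (b : ℝ≥0∞) * (1 / (b : ℝ≥0∞) * (1 / (b : ℝ≥0∞)))
                = (b : ℝ≥0∞) * (1 / (b : ℝ≥0∞)) * (1 / (b : ℝ≥0∞)) := by ring
              _ = 1 / (b : ℝ≥0∞) := by rw [hbinv, one_mul]
    · intro w w' hww'
      refine Disjoint.aedisjoint (Set.disjoint_left.mpr ?_)
      rintro ω ⟨h1, _⟩ ⟨h2, _⟩
      exact hww' (h1.symm.trans h2)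
    · intro w
      exact (coord_nm H1 hH1unif i w).inter (coord_nm H2 hH2unif j (u - w))
  · -- pairwise independence of the combined function
    intro i j i' j' hne u v
    have hset : {ω | H1 ω i + H2 ω j = u ∧ H1 ω i' + H2 ω j' = v}
        = ⋃ p : ZMod b × ZMod b,
            ({ω | H1 ω i = p.1 ∧ H1 ω i' = p.2}
              ∩ {ω | H2 ω j = u - p.1 ∧ H2 ω j' = v - p.2}) := by
      ext ω
      simp only [Set.mem_setOf_eq, Set.mem_iUnion, Set.mem_inter_iff]
      constructor
      · rintro ⟨h1, h2⟩
        exact ⟨(H1 ω i, H1 ω i'), ⟨rfl, rfl⟩,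
          by rw [← h1]; ring, by rw [← h2]; ring⟩
      · rintro ⟨p, ⟨ha, hb'⟩, hc, hd⟩
        rw [ha, hb', hc, hd]
        constructor <;> ring
    rw [hset, measure_iUnion₀, tsum_fintype]
    · -- compute the sum, by cases
      by_cases hii : i = i'
      · subst hii
        have hjj : j ≠ j' := by
          rintro rfl; exact hne rfl
        calc ∑ p : ZMod b × ZMod b, ℙ (({ω | H1 ω i = p.1 ∧ H1 ω i = p.2})
              ∩ {ω | H2 ω j = u - p.1 ∧ H2 ω j' = v - p.2})
            = ∑ w : ZMod b, ∑ w' : ZMod b,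
                (if w' = w then 1 / (b : ℝ≥0∞) else 0)
                  * (1 / (b : ℝ≥0∞) * (1 / (b : ℝ≥0∞))) := by
              rw [Fintype.sum_prod_type]
              refine Finset.sum_congr rfl fun w _ => Finset.sum_congr rfl fun w' _ => ?_
              rw [indep2 i i j j' w w' (u - w) (v - w'), hsame H1 hH1unif i w w',
                hval2 j j' hjj (u - w) (v - w')]
          _ = ∑ _w : ZMod b, 1 / (b : ℝ≥0∞) * (1 / (b : ℝ≥0∞) * (1 / (b : ℝ≥0∞))) := by
              refine Finset.sum_congr rfl fun w _ => ?_
              simp only [ite_mul, zero_mul]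
              rw [Finset.sum_ite_eq' Finset.univ w
                (fun _ => 1 / (b : ℝ≥0∞) * (1 / (b : ℝ≥0∞) * (1 / (b : ℝ≥0∞)))),
                if_pos (Finset.mem_univ w)]
          _ = (b : ℝ≥0∞) * (1 / (b : ℝ≥0∞) * (1 / (b : ℝ≥0∞) * (1 / (b : ℝ≥0∞)))) := by
              rw [Finset.sum_const, Finset.card_univ, ZMod.card, nsmul_eq_mul]
          _ = 1 / (b : ℝ≥0∞) ^ 2 := by
              rw [hsq]
              calc (b : ℝ≥0∞) * (1 / (b : ℝ≥0∞) * (1 / (b : ℝ≥0∞) * (1 / (b : ℝ≥0∞))))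
                  = (b : ℝ≥0∞) * (1 / (b : ℝ≥0∞))
                      * (1 / (b : ℝ≥0∞) * (1 / (b : ℝ≥0∞))) := by ring
                _ = 1 / (b : ℝ≥0∞) * (1 / (b : ℝ≥0∞)) := by rw [hbinv, one_mul]
      · by_cases hjj : j = j'
        · subst hjj
          have hcond : ∀ w w' : ZMod b, (v - w' = u - w) = (w' = v - u + w) :=
            fun w w' => propext ⟨fun h => by linear_combination -h,
              fun h => by linear_combination -h⟩
          calc ∑ p : ZMod b × ZMod b, ℙ (({ω | H1 ω i = p.1 ∧ H1 ω i' = p.2})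
                ∩ {ω | H2 ω j = u - p.1 ∧ H2 ω j = v - p.2})
              = ∑ w : ZMod b, ∑ w' : ZMod b,
                  (1 / (b : ℝ≥0∞) * (1 / (b : ℝ≥0∞)))
                    * (if w' = v - u + w then 1 / (b : ℝ≥0∞) else 0) := by
                rw [Fintype.sum_prod_type]
                refine Finset.sum_congr rfl fun w _ => Finset.sum_congr rfl fun w' _ => ?_
                rw [indep2 i i' j j w w' (u - w) (v - w'), hval1 i i' hii w w',
                  hsame H2 hH2unif j (u - w) (v - w')]
                simp only [hcond]
            _ = ∑ _w : ZMod b, 1 / (b : ℝ≥0∞) * (1 / (b : ℝ≥0∞)) * (1 / (b : ℝ≥0∞)) := by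
                refine Finset.sum_congr rfl fun w _ => ?_
                simp only [mul_ite, mul_zero]
                rw [Finset.sum_ite_eq' Finset.univ (v - u + w)
                  (fun _ => 1 / (b : ℝ≥0∞) * (1 / (b : ℝ≥0∞)) * (1 / (b : ℝ≥0∞))),
                  if_pos (Finset.mem_univ _)]
            _ = (b : ℝ≥0∞) * (1 / (b : ℝ≥0∞) * (1 / (b : ℝ≥0∞)) * (1 / (b : ℝ≥0∞))) := by
                rw [Finset.sum_const, Finset.card_univ, ZMod.card, nsmul_eq_mul]
            _ = 1 / (b : ℝ≥0∞) ^ 2 := by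
                rw [hsq]
                calc (b : ℝ≥0∞) * (1 / (b : ℝ≥0∞) * (1 / (b : ℝ≥0∞)) * (1 / (b : ℝ≥0∞)))
                    = (b : ℝ≥0∞) * (1 / (b : ℝ≥0∞))
                        * (1 / (b : ℝ≥0∞) * (1 / (b : ℝ≥0∞))) := by ring
                  _ = 1 / (b : ℝ≥0∞) * (1 / (b : ℝ≥0∞)) := by rw [hbinv, one_mul]
        · calc ∑ p : ZMod b × ZMod b, ℙ (({ω | H1 ω i = p.1 ∧ H1 ω i' = p.2})
                ∩ {ω | H2 ω j = u - p.1 ∧ H2 ω j' = v - p.2})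
              = ∑ _p : ZMod b × ZMod b,
                  (1 / (b : ℝ≥0∞) * (1 / (b : ℝ≥0∞)))
                    * (1 / (b : ℝ≥0∞) * (1 / (b : ℝ≥0∞))) := by
                refine Finset.sum_congr rfl fun p _ => ?_
                rw [indep2 i i' j j' p.1 p.2 (u - p.1) (v - p.2), hval1 i i' hii p.1 p.2,
                  hval2 j j' hjj (u - p.1) (v - p.2)]
            _ = ((b : ℝ≥0∞) * (b : ℝ≥0∞))
                  * ((1 / (b : ℝ≥0∞) * (1 / (b : ℝ≥0∞)))
                    * (1 / (b : ℝ≥0∞) * (1 / (b : ℝ≥0∞)))) := by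
                rw [Finset.sum_const, Finset.card_univ, Fintype.card_prod, ZMod.card,
                  nsmul_eq_mul, Nat.cast_mul]
            _ = 1 / (b : ℝ≥0∞) ^ 2 := by
                rw [hsq]
                calc ((b : ℝ≥0∞) * (b : ℝ≥0∞))
                      * ((1 / (b : ℝ≥0∞) * (1 / (b : ℝ≥0∞)))
                        * (1 / (b : ℝ≥0∞) * (1 / (b : ℝ≥0∞))))
                    = ((b : ℝ≥0∞) * (1 / (b : ℝ≥0∞))) * ((b : ℝ≥0∞) * (1 / (b : ℝ≥0∞)))
                        * (1 / (b : ℝ≥0∞) * (1 / (b : ℝ≥0∞))) := by ring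
                  _ = 1 / (b : ℝ≥0∞) * (1 / (b : ℝ≥0∞)) := by
                      rw [hbinv, one_mul, one_mul]
    · intro p q hpq
      refine Disjoint.aedisjoint (Set.disjoint_left.mpr ?_)
      rintro ω ⟨⟨h1, h2⟩, _⟩ ⟨⟨h3, h4⟩, _⟩
      exact hpq (Prod.ext (h1.symm.trans h3) (h2.symm.trans h4))
    · intro p
      exact ((coord_nm H1 hH1unif i p.1).inter (coord_nm H1 hH1unif i' p.2)).inter
        ((coord_nm H2 hH2unif j (u - p.1)).inter (coord_nm H2 hH2unif j' (v - p.2)))
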